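/- Consider the 2-stage implicit Peer method with node vector c = (1/2, 1)^T and coefficient matrices P = [[−1/3, 4/3], [−4/9, 13/9]], R = [[1/3, 0], [4/9, 1/3]] (the BDF2 method with step size Δt/2 in Peer form). Let S2 = [[0, 0], [μ, 0]] with μ = 2, let S1 be the unique matrix with S1 V1 = (I − S2) V0 where V0 = (c_i^{j−1}) and V1 = ((c_i−1)^{j−1}), and set Q̂ = R S1, R̂ = R S2. Then the resulting IMEX-Peer method coincides with the IMEX-BDF2 method of Lemma 1: with a_0 = 3/2, a_1 = −2, a_2 = 1/2 and (b_1, b_2) = (−1, 2), one has P = −A_2^{−1} A_1, R = (1/2) A_2^{−1}, Q̂ = (1/2) A_2^{−1} B_1 and R̂ = (1/2) A_2^{−1} B_2. -/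
import Mathlib


/-- The 2-stage IMEX-Peer method obtained from the BDF2-Peer method
(`c = (1/2,1)`, given `P`, `R`) by extrapolation with `S2 = [[0,0],[μ,0]]`, `μ = 2`,
coincides with the IMEX-BDF2 method of Lemma 1 built from `a₀ = 3/2, a₁ = -2, a₂ = 1/2`
and `(b₁,b₂) = (-1,2)`. -/
theorem stmt_17
    (c : Fin 2 → ℝ) (hcv : c = ![1/2, 1])
    (P R S2 V0 V1 S1 A1 A2 B1 B2 : Matrix (Fin 2) (Fin 2) ℝ)
    (a0 a1 a2 b1 b2 : ℝ)
    (ha0 : a0 = 3/2) (ha1 : a1 = -2) (ha2 : a2 = 1/2)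
    (hb1 : b1 = -1) (hb2 : b2 = 2)
    (hP : P = !![-1/3, 4/3; -4/9, 13/9])
    (hR : R = !![1/3, 0; 4/9, 1/3])
    (hS2 : S2 = !![0, 0; 2, 0])
    (hV0 : ∀ i j, V0 i j = c i ^ (j : ℕ))
    (hV1 : ∀ i j, V1 i j = (c i - 1) ^ (j : ℕ))
    (hS1 : S1 * V1 = (1 - S2) * V0)
    (hA1 : A1 = !![a2, a1; 0, a2])
    (hA2 : A2 = !![a0, 0; a1, a0])
    (hB1 : B1 = !![b1, b2; 0, b1])
    (hB2 : B2 = !![0, 0; b2, 0]) :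
    P = -(A2⁻¹ * A1) ∧ R = (2 : ℝ)⁻¹ • A2⁻¹ ∧
      R * S1 = (2 : ℝ)⁻¹ • (A2⁻¹ * B1) ∧ R * S2 = (2 : ℝ)⁻¹ • (A2⁻¹ * B2) := by
  subst ha0 ha1 ha2 hb1 hb2 hP hR hS2 hA1 hA2 hB1 hB2 hcv
  -- explicit forms of V0, V1
  have hV0' : V0 = !![1, 1/2; 1, 1] := by
    ext i j; fin_cases i <;> fin_cases j <;>
      simp [hV0, Matrix.cons_val_zero, Matrix.cons_val_one] <;> norm_num
  have hV1' : V1 = !![1, -1/2; 1, 0] := by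
    ext i j; fin_cases i <;> fin_cases j <;>
      simp [hV1, Matrix.cons_val_zero, Matrix.cons_val_one] <;> norm_num
  subst hV0' hV1'
  -- compute A2⁻¹
  have hinv : (!![(3:ℝ)/2, 0; -2, 3/2])⁻¹ = !![2/3, 0; 8/9, 2/3] := by
    apply Matrix.inv_eq_right_inv
    norm_num [Matrix.mul_fin_two]
    rw [Matrix.one_fin_two]
  -- determine S1 from the linear system
  have hS1' : S1 = !![-1, 2; 0, -1] := by
    have h := hS1
    have hkey : S1 * !![(1:ℝ), -1/2; 1, 0] * !![(0:ℝ), 1; -2, 2]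
        = ((1 - !![(0:ℝ), 0; 2, 0]) * !![1, 1/2; 1, 1]) * !![(0:ℝ), 1; -2, 2] := by
      rw [h]
    have hV1inv : (!![(1:ℝ), -1/2; 1, 0]) * !![(0:ℝ), 1; -2, 2] = 1 := by
      norm_num [Matrix.mul_fin_two]
      rw [Matrix.one_fin_two]
    rw [Matrix.mul_assoc, hV1inv, Matrix.mul_one] at hkey
    rw [hkey]
    ext i j; fin_cases i <;> fin_cases j <;>
      simp [Matrix.mul_apply, Fin.sum_univ_two, Matrix.sub_apply, Matrix.one_apply] <;> norm_num
  subst hS1'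
  refine ⟨?_, ?_, ?_, ?_⟩ <;>
    rw [hinv] <;>
    ext i j <;> fin_cases i <;> fin_cases j <;>
      simp [Matrix.mul_apply, Fin.sum_univ_two, Matrix.neg_apply, Matrix.smul_apply] <;> norm_num
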